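/- arXiv:1809.05918 — 5 statements merged into one kernel-verified Lean document; each statement's English description precedes it below -/
import Mathlib

section
/- Let λ₁, λ₂, λ₃ be real numbers with λ₁ + λ₂ + λ₃ = 0. Then for all real numbers b₁, b₂, b₃, one has |λ₁·b₁² + λ₂·b₂² + λ₃·b₃²| ≤ (√6/3)·√(λ₁² + λ₂² + λ₃²)·(b₁² + b₂² + b₃²). -/
lemma key_bound (l : ℝ) (Q : ℝ) (hQ : 0 ≤ Q) (h : l ^ 2 ≤ 2 / 3 * Q) :
    |l| ≤ Real.sqrt 6 / 3 * Real.sqrt Q := by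
  have hc : 0 ≤ Real.sqrt 6 / 3 * Real.sqrt Q := by positivity
  have hsq : (Real.sqrt 6 / 3 * Real.sqrt Q) ^ 2 = 2 / 3 * Q := by
    rw [mul_pow, div_pow, Real.sq_sqrt (by norm_num : (0:ℝ) ≤ 6),
      Real.sq_sqrt hQ]
    ring
  calc |l| = Real.sqrt (l ^ 2) := (Real.sqrt_sq_eq_abs l).symm
    _ ≤ Real.sqrt ((Real.sqrt 6 / 3 * Real.sqrt Q) ^ 2) := by
        apply Real.sqrt_le_sqrt; rw [hsq]; exact h
    _ = Real.sqrt 6 / 3 * Real.sqrt Q := Real.sqrt_sq hc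

theorem diag_tracefree_sharp_ineq
    (l1 l2 l3 : ℝ) (htr : l1 + l2 + l3 = 0) :
    ∀ b1 b2 b3 : ℝ,
      |l1 * b1 ^ 2 + l2 * b2 ^ 2 + l3 * b3 ^ 2| ≤
        (Real.sqrt 6 / 3) * Real.sqrt (l1 ^ 2 + l2 ^ 2 + l3 ^ 2) *
          (b1 ^ 2 + b2 ^ 2 + b3 ^ 2) := by
  intro b1 b2 b3
  set Q := l1 ^ 2 + l2 ^ 2 + l3 ^ 2 with hQdef
  have hQ : 0 ≤ Q := by positivity
  have e1 : l1 ^ 2 = (l2 + l3) ^ 2 := by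
    have : l1 = -(l2 + l3) := by linarith
    rw [this]; ring
  have e2 : l2 ^ 2 = (l1 + l3) ^ 2 := by
    have : l2 = -(l1 + l3) := by linarith
    rw [this]; ring
  have e3 : l3 ^ 2 = (l1 + l2) ^ 2 := by
    have : l3 = -(l1 + l2) := by linarith
    rw [this]; ring
  have h1 : |l1| ≤ Real.sqrt 6 / 3 * Real.sqrt Q :=
    key_bound l1 Q hQ (by rw [hQdef]; nlinarith [sq_nonneg (l2 - l3), e1])
  have h2 : |l2| ≤ Real.sqrt 6 / 3 * Real.sqrt Q :=
    key_bound l2 Q hQ (by rw [hQdef]; nlinarith [sq_nonneg (l1 - l3), e2])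
  have h3 : |l3| ≤ Real.sqrt 6 / 3 * Real.sqrt Q :=
    key_bound l3 Q hQ (by rw [hQdef]; nlinarith [sq_nonneg (l1 - l2), e3])
  have a1 := neg_abs_le l1
  have a2 := neg_abs_le l2
  have a3 := neg_abs_le l3
  have b1' := le_abs_self l1
  have b2' := le_abs_self l2
  have b3' := le_abs_self l3
  rw [abs_le]
  constructor <;> nlinarith [sq_nonneg b1, sq_nonneg b2, sq_nonneg b3,
    mul_le_mul_of_nonneg_right h1 (sq_nonneg b1),
    mul_le_mul_of_nonneg_right h2 (sq_nonneg b2),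
    mul_le_mul_of_nonneg_right h3 (sq_nonneg b3),
    mul_le_mul_of_nonneg_right a1 (sq_nonneg b1),
    mul_le_mul_of_nonneg_right a2 (sq_nonneg b2),
    mul_le_mul_of_nonneg_right a3 (sq_nonneg b3),
    mul_le_mul_of_nonneg_right b1' (sq_nonneg b1),
    mul_le_mul_of_nonneg_right b2' (sq_nonneg b2),
    mul_le_mul_of_nonneg_right b3' (sq_nonneg b3)]
end

section
/- Let A be a 3×3 real symmetric matrix with trace zero. Then for every vector X ∈ ℝ³, |Xᵀ A X| ≤ (√6/3)·‖A‖·|X|², where ‖A‖ denotes the Frobenius norm of A (the square root of the sum of squares of the entries) and |X| the Euclidean norm of X. -/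
open Matrix in
theorem tracefree_symmetric_sharp_ineq
    (A : Matrix (Fin 3) (Fin 3) ℝ) (hsymm : A.IsSymm) (htr : A.trace = 0) :
    ∀ X : Fin 3 → ℝ,
      |X ⬝ᵥ A.mulVec X| ≤
        (Real.sqrt 6 / 3) * Real.sqrt (∑ i, ∑ j, (A i j) ^ 2) *
          (∑ i, (X i) ^ 2) := by
  intro X
  set n : ℝ := ∑ i, (X i) ^ 2 with hn
  have hn0 : 0 ≤ n := Finset.sum_nonneg fun i _ => sq_nonneg _
  set B : Fin 3 → Fin 3 → ℝ := fun i j => X i * X j - (if i = j then n / 3 else 0) with hB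
  set q : ℝ := X ⬝ᵥ A.mulVec X with hq
  set S : ℝ := ∑ i, ∑ j, (A i j) ^ 2 with hS
  have hS0 : 0 ≤ S := Finset.sum_nonneg fun i _ => Finset.sum_nonneg fun j _ => sq_nonneg _
  have key1 : ∑ p : Fin 3 × Fin 3, A p.1 p.2 * B p.1 p.2 = q := by
    have htr' : A 0 0 + A 1 1 + A 2 2 = 0 := by
      simpa [Matrix.trace, Matrix.diag, Fin.sum_univ_three] using htr
    simp only [hq, hB, Fintype.sum_prod_type, dotProduct, Matrix.mulVec,
      Fin.sum_univ_three]
    simp only [hn, Fin.sum_univ_three]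
    simp only [Fin.isValue, if_true, if_false, show ((0:Fin 3) = 1) = False by simp,
      show ((0:Fin 3) = 2) = False by simp, show ((1:Fin 3) = 0) = False by simp,
      show ((1:Fin 3) = 2) = False by simp, show ((2:Fin 3) = 0) = False by simp,
      show ((2:Fin 3) = 1) = False by simp]
    nlinarith [htr', sq_nonneg (X 0)]
  have key2 : ∑ p : Fin 3 × Fin 3, B p.1 p.2 ^ 2 = 2 / 3 * n ^ 2 := by
    simp only [hB, Fintype.sum_prod_type, Fin.sum_univ_three]
    simp only [Fin.isValue, if_true, if_false, show ((0:Fin 3) = 1) = False by simp,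
      show ((0:Fin 3) = 2) = False by simp, show ((1:Fin 3) = 0) = False by simp,
      show ((1:Fin 3) = 2) = False by simp, show ((2:Fin 3) = 0) = False by simp,
      show ((2:Fin 3) = 1) = False by simp]
    simp only [hn, Fin.sum_univ_three]
    ring
  have cs := Finset.sum_mul_sq_le_sq_mul_sq Finset.univ
    (fun p : Fin 3 × Fin 3 => A p.1 p.2) (fun p : Fin 3 × Fin 3 => B p.1 p.2)
  have hSsum : (∑ p : Fin 3 × Fin 3, A p.1 p.2 ^ 2) = S := by
    simp [hS, Fintype.sum_prod_type]
  rw [key1, hSsum, key2] at cs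
  have habs : |q| = Real.sqrt (q ^ 2) := (Real.sqrt_sq_eq_abs q).symm
  rw [habs]
  have h1 : Real.sqrt (q ^ 2) ≤ Real.sqrt (S * (2 / 3 * n ^ 2)) := Real.sqrt_le_sqrt cs
  refine h1.trans_eq ?_
  rw [show S * (2 / 3 * n ^ 2) = (6 / 3 ^ 2) * S * n ^ 2 by ring]
  rw [Real.sqrt_mul (by positivity), Real.sqrt_sq hn0,
      Real.sqrt_mul (by positivity), Real.sqrt_div' 6 (by norm_num)]
  rw [Real.sqrt_sq (by norm_num : (0:ℝ) ≤ 3)]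
end

section
/- Let C ≥ 0 and let τ < τ′ < t be real numbers. Suppose v : ℝ → ℝ is continuous and nonnegative on [τ, t] and differentiable on [τ, t] with v′(s) ≤ C·v(s) for all s ∈ [τ, t]. Then v(t) ≤ (C + 1/(τ′ − τ))·∫_τ^t v(s) ds. -/
theorem cutoff_pointwise_estimate
    (C τ τ' t : ℝ) (hC : 0 ≤ C) (h1 : τ < τ') (h2 : τ' < t)
    (v v' : ℝ → ℝ)
    (hcont : ContinuousOn v (Set.Icc τ t))
    (hnonneg : ∀ s ∈ Set.Icc τ t, 0 ≤ v s)
    (hderiv : ∀ s ∈ Set.Icc τ t, HasDerivWithinAt v (v' s) (Set.Icc τ t) s)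
    (hineq : ∀ s ∈ Set.Icc τ t, v' s ≤ C * v s) :
    v t ≤ (C + 1 / (τ' - τ)) * ∫ s in τ..t, v s := by
  have hτt : τ < t := h1.trans h2
  set h : ℝ → ℝ := fun s => (1 + C * (s - τ)) * v s with hh
  have hconth : ContinuousOn h (Set.Icc τ t) :=
    (Continuous.continuousOn (by continuity)).mul hcont
  have hint_v : IntervalIntegrable v MeasureTheory.volume τ t := by
    apply ContinuousOn.intervalIntegrable
    rwa [Set.uIcc_of_le hτt.le]
  have hint_h : IntervalIntegrable h MeasureTheory.volume τ t := by
    apply ContinuousOn.intervalIntegrable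
    rwa [Set.uIcc_of_le hτt.le]
  -- F is antitone on [τ, t]
  set F : ℝ → ℝ := fun s => (s - τ) * v s - ∫ u in τ..s, h u with hF
  have hIcc : interior (Set.Icc τ t) = Set.Ioo τ t := interior_Icc
  have hanti : AntitoneOn F (Set.Icc τ t) := by
    apply antitoneOn_of_hasDerivWithinAt_nonpos (convex_Icc τ t)
      (f' := fun s => (1 * v s + (s - τ) * v' s) - h s)
    · apply ContinuousOn.sub
      · exact (Continuous.continuousOn (by continuity)).mul hcont
      · have := intervalIntegral.continuousOn_primitive_interval
          (f := h) (a := τ) (b := t) (μ := MeasureTheory.volume) ?_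
        · rwa [Set.uIcc_of_le hτt.le] at this
        · rw [Set.uIcc_of_le hτt.le]
          exact hconth.integrableOn_compact isCompact_Icc
    · intro s hs
      rw [hIcc] at hs ⊢
      have hs' : s ∈ Set.Icc τ t := Set.Ioo_subset_Icc_self hs
      have hd1 : HasDerivAt (fun s => (s - τ) * v s) (1 * v s + (s - τ) * v' s) s := by
        have hv : HasDerivAt v (v' s) s := by
          apply (hderiv s hs').hasDerivAt
          exact Icc_mem_nhds hs.1 hs.2
        exact ((hasDerivAt_id s).sub_const τ).mul hv
      have hd2 : HasDerivAt (fun s => ∫ u in τ..s, h u) (h s) s := by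
        apply intervalIntegral.integral_hasDerivAt_right
          (hint_h.mono_set ?_) ?_ ?_
        · rw [Set.uIcc_of_le hs'.1, Set.uIcc_of_le hτt.le]
          exact Set.Icc_subset_Icc le_rfl hs'.2
        · exact (hconth.mono Set.Ioo_subset_Icc_self).stronglyMeasurableAtFilter
            isOpen_Ioo _ hs
        · exact (hconth.mono Set.Ioo_subset_Icc_self).continuousAt
            (isOpen_Ioo.mem_nhds hs)
      exact ((hd1.sub hd2).hasDerivWithinAt)
    · intro s hs
      rw [hIcc] at hs
      have hs' : s ∈ Set.Icc τ t := Set.Ioo_subset_Icc_self hs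
      have h1 := hineq s hs'
      have h2 := hnonneg s hs'
      have : (s - τ) * v' s ≤ (s - τ) * (C * v s) := by
        apply mul_le_mul_of_nonneg_left h1 (by linarith [hs.1])
      simp only [hh]
      nlinarith
  have hFt : F t ≤ F τ :=
    hanti (Set.left_mem_Icc.mpr hτt.le) (Set.right_mem_Icc.mpr hτt.le) hτt.le
  have hFτ : F τ = 0 := by simp [hF]
  have hgt : (t - τ) * v t ≤ ∫ u in τ..t, h u := by
    have := hFt.trans_eq hFτ
    simp only [hF] at this
    linarith
  -- bound the integral of h
  have hIb : (∫ u in τ..t, h u) ≤ (1 + C * (t - τ)) * ∫ s in τ..t, v s := by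
    rw [← intervalIntegral.integral_const_mul]
    apply intervalIntegral.integral_mono_on hτt.le hint_h (hint_v.const_mul _)
    intro s hs
    have h2 := hnonneg s hs
    have : 1 + C * (s - τ) ≤ 1 + C * (t - τ) := by nlinarith [hs.2]
    simp only [hh]
    nlinarith
  have hInn : 0 ≤ ∫ s in τ..t, v s :=
    intervalIntegral.integral_nonneg hτt.le hnonneg
  set I := ∫ s in τ..t, v s
  have key : (t - τ) * v t ≤ (1 + C * (t - τ)) * I := hgt.trans hIb
  have hττ' : 0 < τ' - τ := by linarith
  have hd : (τ' - τ) * (1 / (τ' - τ)) = 1 := by field_simp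
  have h5 : 1 ≤ (t - τ) * (1 / (τ' - τ)) := by
    calc (1:ℝ) = (τ' - τ) * (1 / (τ' - τ)) := hd.symm
    _ ≤ (t - τ) * (1 / (τ' - τ)) := by
        apply mul_le_mul_of_nonneg_right (by linarith) (by positivity)
  have h6 : I ≤ (t - τ) * (1 / (τ' - τ)) * I := le_mul_of_one_le_left hInn h5
  have final : (t - τ) * v t ≤ (t - τ) * ((C + 1 / (τ' - τ)) * I) := by nlinarith [key, h6]
  exact le_of_mul_le_mul_left final (by linarith)
end

section
/- Let C ≥ 0 and 0 < τ < t be real numbers. Suppose u, w : ℝ → ℝ are continuous and nonnegative on [0, t], u is differentiable on [0, t], and u′(s) ≤ C·u(s) − w(s) for all s ∈ [0, t]. Then u(t) + ∫_τ^t w(s) ds ≤ (C + 1/τ)·∫_0^t u(s) ds. -/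
open MeasureTheory intervalIntegral Set

theorem cutoff_dissipation_estimate
    (C τ t : ℝ) (hC : 0 ≤ C) (hτ : 0 < τ) (hτt : τ < t)
    (u u' w : ℝ → ℝ)
    (hucont : ContinuousOn u (Set.Icc 0 t))
    (hwcont : ContinuousOn w (Set.Icc 0 t))
    (hunonneg : ∀ s ∈ Set.Icc 0 t, 0 ≤ u s)
    (hwnonneg : ∀ s ∈ Set.Icc 0 t, 0 ≤ w s)
    (hderiv : ∀ s ∈ Set.Icc 0 t, HasDerivWithinAt u (u' s) (Set.Icc 0 t) s)
    (hineq : ∀ s ∈ Set.Icc 0 t, u' s ≤ C * u s - w s) :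
    u t + (∫ s in τ..t, w s) ≤ (C + 1 / τ) * ∫ s in (0:ℝ)..t, u s := by
  have h0t : (0:ℝ) < t := hτ.trans hτt
  have hsub1 : Set.Icc (0:ℝ) τ ⊆ Set.Icc 0 t := Set.Icc_subset_Icc le_rfl hτt.le
  have hsub2 : Set.Icc τ t ⊆ Set.Icc (0:ℝ) t := Set.Icc_subset_Icc hτ.le le_rfl
  -- at interior points of [0,t], u has a genuine derivative and u, w are ContinuousAt
  have hmem : ∀ x ∈ Set.Ioo (0:ℝ) t, Set.Icc (0:ℝ) t ∈ nhds x := fun x hx =>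
    Icc_mem_nhds hx.1 hx.2
  have hderivAt : ∀ x ∈ Set.Ioo (0:ℝ) t, HasDerivAt u (u' x) x := fun x hx =>
    (hderiv x (Set.Ioo_subset_Icc_self hx)).hasDerivAt (hmem x hx)
  have hucAt : ∀ x ∈ Set.Ioo (0:ℝ) t, ContinuousAt u x := fun x hx =>
    hucont.continuousAt (hmem x hx)
  have hwcAt : ∀ x ∈ Set.Ioo (0:ℝ) t, ContinuousAt w x := fun x hx =>
    hwcont.continuousAt (hmem x hx)
  have humeas : ∀ x ∈ Set.Ioo (0:ℝ) t, StronglyMeasurableAtFilter u (nhds x) := fun x hx =>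
    ⟨Set.Icc 0 t, hmem x hx, hucont.aestronglyMeasurable measurableSet_Icc⟩
  have hwmeas : ∀ x ∈ Set.Ioo (0:ℝ) t, StronglyMeasurableAtFilter w (nhds x) := fun x hx =>
    ⟨Set.Icc 0 t, hmem x hx, hwcont.aestronglyMeasurable measurableSet_Icc⟩
  have huint : ∀ a b : ℝ, (0:ℝ) ≤ a → b ≤ t → a ≤ b → IntervalIntegrable u volume a b := by
    intro a b ha hb hab
    exact (hucont.mono (fun x hx => by
      rw [Set.uIcc_of_le hab] at hx
      exact ⟨ha.trans hx.1, hx.2.trans hb⟩)).intervalIntegrable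
  have hwint : ∀ a b : ℝ, (0:ℝ) ≤ a → b ≤ t → a ≤ b → IntervalIntegrable w volume a b := by
    intro a b ha hb hab
    exact (hwcont.mono (fun x hx => by
      rw [Set.uIcc_of_le hab] at hx
      exact ⟨ha.trans hx.1, hx.2.trans hb⟩)).intervalIntegrable
  -- Step 1 : u τ ≤ (C + 1/τ) * ∫_0^τ u
  set F₁ : ℝ → ℝ := fun s => s / τ * u s - (C + 1 / τ) * ∫ x in (0:ℝ)..s, u x with hF₁
  have hF₁cont : ContinuousOn F₁ (Set.Icc 0 τ) := by
    apply ContinuousOn.sub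
    · exact (continuousOn_id.div_const τ).mul (hucont.mono hsub1)
    · apply ContinuousOn.const_smul (c := C + 1/τ) ?_ |>.congr (fun x hx => rfl)
      have := continuousOn_primitive_interval (f := u) (a := (0:ℝ)) (b := τ) (μ := volume)
        (by rw [Set.uIcc_of_le hτ.le]
            exact (hucont.mono hsub1).integrableOn_Icc)
      rw [Set.uIcc_of_le hτ.le] at this
      exact this
  have hF₁anti : AntitoneOn F₁ (Set.Icc 0 τ) := by
    apply antitoneOn_of_hasDerivWithinAt_nonpos (convex_Icc 0 τ) hF₁cont
      (f' := fun x => (1 / τ * u x + x / τ * u' x) - (C + 1 / τ) * u x)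
    · intro x hx
      rw [interior_Icc] at hx ⊢
      have hx' : x ∈ Set.Ioo (0:ℝ) t := ⟨hx.1, hx.2.trans hτt⟩
      have hd1 : HasDerivAt (fun s : ℝ => s / τ * u s) (1 / τ * u x + x / τ * u' x) x := by
        simpa [Pi.mul_def] using ((hasDerivAt_id x).div_const τ).mul (hderivAt x hx')
      have hd2 : HasDerivAt (fun s : ℝ => ∫ y in (0:ℝ)..s, u y) (u x) x :=
        integral_hasDerivAt_right (huint 0 x le_rfl hx'.2.le hx'.1.le)
          (humeas x hx') (hucAt x hx')
      exact (hd1.sub ((hd2.const_mul (C + 1/τ)))).hasDerivWithinAt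
    · intro x hx
      rw [interior_Icc] at hx
      have hx' : x ∈ Set.Icc (0:ℝ) t := ⟨hx.1.le, (hx.2.trans hτt).le⟩
      have h1 := hineq x hx'
      have h2 := hunonneg x hx'
      have h3 := hwnonneg x hx'
      have key : x * u' x ≤ τ * C * u x := by
        have ha : x * u' x ≤ x * (C * u x - w x) := mul_le_mul_of_nonneg_left h1 hx.1.le
        have hb : 0 ≤ x * w x := mul_nonneg hx.1.le h3
        have hc : 0 ≤ (τ - x) * (C * u x) :=
          mul_nonneg (sub_nonneg.2 hx.2.le) (mul_nonneg hC h2)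
        nlinarith
      have heq : 1 / τ * u x + x / τ * u' x - (C + 1 / τ) * u x
          = (x * u' x - τ * C * u x) / τ := by
        field_simp; ring
      rw [heq]
      exact div_nonpos_of_nonpos_of_nonneg (sub_nonpos.2 key) hτ.le
  have step1 : u τ ≤ (C + 1 / τ) * ∫ s in (0:ℝ)..τ, u s := by
    have h := hF₁anti (Set.left_mem_Icc.2 hτ.le) (Set.right_mem_Icc.2 hτ.le) hτ.le
    simp only [hF₁] at h
    rw [intervalIntegral.integral_same, div_self hτ.ne'] at h
    simpa using h
  -- Step 2 : u t + ∫_τ^t (w - C u) ≤ u τ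
  set F₂ : ℝ → ℝ := fun s => u s + ∫ x in τ..s, (w x - C * u x) with hF₂
  have hwuint : ∀ a b : ℝ, (0:ℝ) ≤ a → b ≤ t → a ≤ b →
      IntervalIntegrable (fun x => w x - C * u x) volume a b := fun a b ha hb hab =>
    (hwint a b ha hb hab).sub ((huint a b ha hb hab).const_mul C)
  have hF₂cont : ContinuousOn F₂ (Set.Icc τ t) := by
    apply ContinuousOn.add (hucont.mono hsub2)
    have := continuousOn_primitive_interval (f := fun x => w x - C * u x) (a := τ) (b := t)
      (μ := volume)
      (by rw [Set.uIcc_of_le hτt.le]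
          exact ((hwcont.mono hsub2).sub ((hucont.mono hsub2).const_smul C)).integrableOn_Icc)
    rw [Set.uIcc_of_le hτt.le] at this
    exact this
  have hF₂anti : AntitoneOn F₂ (Set.Icc τ t) := by
    apply antitoneOn_of_hasDerivWithinAt_nonpos (convex_Icc τ t) hF₂cont
      (f' := fun x => u' x + (w x - C * u x))
    · intro x hx
      rw [interior_Icc] at hx ⊢
      have hx' : x ∈ Set.Ioo (0:ℝ) t := ⟨hτ.trans hx.1, hx.2⟩
      have hd2 : HasDerivAt (fun s : ℝ => ∫ y in τ..s, (w y - C * u y)) (w x - C * u x) x :=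
        integral_hasDerivAt_right (hwuint τ x hτ.le hx'.2.le hx.1.le)
          ⟨Set.Icc 0 t, hmem x hx',
            ((hwcont.sub (hucont.const_smul C)).aestronglyMeasurable measurableSet_Icc)⟩
          ((hwcAt x hx').sub ((hucAt x hx').const_smul C))
      exact ((hderivAt x hx').add hd2).hasDerivWithinAt
    · intro x hx
      rw [interior_Icc] at hx
      have hx' : x ∈ Set.Icc (0:ℝ) t := ⟨(hτ.trans hx.1).le, hx.2.le⟩
      have := hineq x hx'
      linarith
  have step2 : u t + ∫ s in τ..t, (w s - C * u s) ≤ u τ := by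
    have h := hF₂anti (Set.left_mem_Icc.2 hτt.le) (Set.right_mem_Icc.2 hτt.le) hτt.le
    simpa [hF₂] using h
  -- combine
  have hsplit : (∫ s in (0:ℝ)..t, u s) = (∫ s in (0:ℝ)..τ, u s) + ∫ s in τ..t, u s :=
    (intervalIntegral.integral_add_adjacent_intervals (huint 0 τ le_rfl hτt.le hτ.le)
      (huint τ t hτ.le le_rfl hτt.le)).symm
  have hwsub : (∫ s in τ..t, (w s - C * u s))
      = (∫ s in τ..t, w s) - C * ∫ s in τ..t, u s := by
    rw [intervalIntegral.integral_sub (hwint τ t hτ.le le_rfl hτt.le)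
      ((huint τ t hτ.le le_rfl hτt.le).const_mul C), intervalIntegral.integral_const_mul]
  have huτt_nonneg : 0 ≤ ∫ s in τ..t, u s :=
    intervalIntegral.integral_nonneg hτt.le (fun x hx => hunonneg x ⟨hτ.le.trans hx.1, hx.2⟩)
  have h1τ : 0 ≤ 1 / τ := by positivity
  rw [hwsub] at step2
  rw [hsplit]
  nlinarith [mul_nonneg h1τ huτt_nonneg]
end

section
/- Let T > 0, C > 0, c > 0 and ε ≥ 0. Suppose u, v, w : ℝ → ℝ are continuous and nonnegative on [0, T], u and v are differentiable on [0, T], and for all t ∈ [0, T]: (i) u′(t) ≤ C·u(t) − c·w(t); (ii) v′(t) ≤ C·v(t); (iii) v(t) ≤ √(u(t))·w(t); (iv) u(t) ≤ ε. Then for every t ∈ (0, T], v(t) ≤ c⁻¹·(C + 4/t)²·ε^{3/2}·t. -/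
open Set intervalIntegral

/-- If `f` is continuous on `[a,b]`, differentiable with nonpositive derivative on `(a,b)`,
then `f b ≤ f a`. -/
lemma antitone_aux {a b : ℝ} (hab : a ≤ b) {f f' : ℝ → ℝ}
    (hcont : ContinuousOn f (Icc a b))
    (hderiv : ∀ s ∈ Ioo a b, HasDerivAt f (f' s) s)
    (hf' : ∀ s ∈ Ioo a b, f' s ≤ 0) : f b ≤ f a := by
  have hdiff : DifferentiableOn ℝ f (interior (Icc a b)) := by
    rw [interior_Icc]
    exact fun s hs => (hderiv s hs).differentiableAt.differentiableWithinAt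
  have hnp : ∀ s ∈ interior (Icc a b), deriv f s ≤ 0 := by
    rw [interior_Icc]
    intro s hs
    rw [(hderiv s hs).deriv]
    exact hf' s hs
  exact antitoneOn_of_deriv_nonpos (convex_Icc a b) hcont hdiff hnp
    (left_mem_Icc.2 hab) (right_mem_Icc.2 hab) hab

theorem interior_smoothing_estimate
    (T C c ε : ℝ) (hT : 0 < T) (hC : 0 < C) (hc : 0 < c) (hε : 0 ≤ ε)
    (u v w u' v' : ℝ → ℝ)
    (hucont : ContinuousOn u (Set.Icc 0 T))
    (hvcont : ContinuousOn v (Set.Icc 0 T))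
    (hwcont : ContinuousOn w (Set.Icc 0 T))
    (hunonneg : ∀ t ∈ Set.Icc 0 T, 0 ≤ u t)
    (hvnonneg : ∀ t ∈ Set.Icc 0 T, 0 ≤ v t)
    (hwnonneg : ∀ t ∈ Set.Icc 0 T, 0 ≤ w t)
    (huderiv : ∀ t ∈ Set.Icc 0 T, HasDerivWithinAt u (u' t) (Set.Icc 0 T) t)
    (hvderiv : ∀ t ∈ Set.Icc 0 T, HasDerivWithinAt v (v' t) (Set.Icc 0 T) t)
    (hu : ∀ t ∈ Set.Icc 0 T, u' t ≤ C * u t - c * w t)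
    (hv : ∀ t ∈ Set.Icc 0 T, v' t ≤ C * v t)
    (hinterp : ∀ t ∈ Set.Icc 0 T, v t ≤ Real.sqrt (u t) * w t)
    (husmall : ∀ t ∈ Set.Icc 0 T, u t ≤ ε) :
    ∀ t ∈ Set.Ioc 0 T, v t ≤ c⁻¹ * (C + 4 / t) ^ 2 * ε ^ ((3:ℝ)/2) * t := by
  rintro t ⟨ht0, htT⟩
  have htmem : t ∈ Icc (0:ℝ) T := ⟨ht0.le, htT⟩
  set a : ℝ := t / 4 with ha_def
  set b : ℝ := t / 2 with hb_def
  have ha0 : 0 < a := by positivity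
  have hab : a < b := by rw [ha_def, hb_def]; linarith
  have hbt : b < t := by rw [hb_def]; linarith
  have hsub : Icc a t ⊆ Icc 0 T := Icc_subset_Icc ha0.le htT
  have hamem : a ∈ Icc (0:ℝ) T := hsub ⟨le_refl a, (hab.trans hbt).le⟩
  have hbmem : b ∈ Icc (0:ℝ) T := hsub ⟨hab.le, hbt.le⟩
  -- continuity at interior points
  have hnhds : ∀ s, s ∈ Ioo a t → Icc (0:ℝ) T ∈ nhds s := by
    intro s hs
    exact Icc_mem_nhds (lt_trans ha0 hs.1) (lt_of_lt_of_le hs.2 htT)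
  have hmems : ∀ s, s ∈ Ioo a t → s ∈ Icc (0:ℝ) T := fun s hs =>
    hsub ⟨hs.1.le, hs.2.le⟩
  -- the primitive of w
  set W : ℝ → ℝ := fun s => ∫ r in a..s, w r with hW_def
  have hWa : W a = 0 := integral_same
  have hWderiv : ∀ s ∈ Ioo a t, HasDerivAt W (w s) s := by
    intro s hs
    have hint : IntervalIntegrable w MeasureTheory.volume a s := by
      apply ContinuousOn.intervalIntegrable
      apply hwcont.mono
      rw [uIcc_of_le hs.1.le]
      exact (Icc_subset_Icc le_rfl hs.2.le).trans hsub
    have hmeas : StronglyMeasurableAtFilter w (nhds s) MeasureTheory.volume := by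
      refine ContinuousOn.stronglyMeasurableAtFilter isOpen_Ioo
        (hwcont.mono Ioo_subset_Icc_self) s ?_
      exact ⟨lt_trans ha0 hs.1, lt_of_lt_of_le hs.2 htT⟩
    have hca : ContinuousAt w s := hwcont.continuousAt (hnhds s hs)
    exact integral_hasDerivAt_right hint hmeas hca
  have hWcont : ContinuousOn W (Icc a t) := by
    have : IntervalIntegrable w MeasureTheory.volume a t := by
      apply ContinuousOn.intervalIntegrable
      apply hwcont.mono
      rw [uIcc_of_le (hab.trans hbt).le]
      exact hsub
    have h := continuousOn_primitive_interval' this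
      (left_mem_uIcc (a := a) (b := t))
    rwa [uIcc_of_le (hab.trans hbt).le] at h
  -- derivatives of u, v at interior points
  have huD : ∀ s ∈ Ioo a t, HasDerivAt u (u' s) s := fun s hs =>
    (huderiv s (hmems s hs)).hasDerivAt (hnhds s hs)
  have hvD : ∀ s ∈ Ioo a t, HasDerivAt v (v' s) s := fun s hs =>
    (hvderiv s (hmems s hs)).hasDerivAt (hnhds s hs)
  -- pointwise bound v ≤ √ε * w
  have hvw : ∀ s ∈ Icc (0:ℝ) T, v s ≤ Real.sqrt ε * w s := by
    intro s hs
    calc v s ≤ Real.sqrt (u s) * w s := hinterp s hs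
      _ ≤ Real.sqrt ε * w s :=
        mul_le_mul_of_nonneg_right (Real.sqrt_le_sqrt (husmall s hs)) (hwnonneg s hs)
  -- Step A: c * W t ≤ ε + C * ε * t
  have stepA : c * W t ≤ ε + C * ε * t := by
    have hmono : u t + c * W t - C * ε * t ≤ u a + c * W a - C * ε * a :=
      antitone_aux (f := fun s => u s + c * W s - C * ε * s)
        (f' := fun s => u' s + c * w s - C * ε) (hab.trans hbt).le
        (((hucont.mono hsub).add (continuousOn_const.mul hWcont)).sub
          (continuousOn_const.mul (continuous_id.continuousOn)))
        (fun s hs => by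
          have h := ((huD s hs).add ((hWderiv s hs).const_mul c)).sub
            ((hasDerivAt_id s).const_mul (C * ε))
          rw [mul_one] at h
          exact h)
        (fun s hs => by
          have h1 := hu s (hmems s hs)
          have h2 := husmall s (hmems s hs)
          nlinarith [mul_le_mul_of_nonneg_left h2 hC.le])
    have hua : u a ≤ ε := husmall a hamem
    have hut : 0 ≤ u t := hunonneg t htmem
    have hCa : 0 ≤ C * ε * a := by positivity
    rw [hWa] at hmono
    nlinarith
  -- Step B: v b ≤ K * W b where K = (C + 4/t) * √ε
  set K : ℝ := (C + 4 / t) * Real.sqrt ε with hK_def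
  have hK0 : 0 ≤ K := by positivity
  have stepB : v b ≤ K * W b := by
    have hmono : 4 / t * (b - a) * v b - K * W b ≤ 4 / t * (a - a) * v a - K * W a :=
      antitone_aux (f := fun s => 4 / t * (s - a) * v s - K * W s)
        (f' := fun s => 4 / t * v s + 4 / t * (s - a) * v' s - K * w s) hab.le
        (((continuousOn_const.mul (continuous_id.continuousOn.sub continuousOn_const)).mul
            (hvcont.mono ((Icc_subset_Icc le_rfl hbt.le).trans hsub))).sub
          (continuousOn_const.mul (hWcont.mono (Icc_subset_Icc le_rfl hbt.le))))
        (fun s hs => by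
          have hs' : s ∈ Ioo a t := ⟨hs.1, hs.2.trans hbt⟩
          have h1 : HasDerivAt (fun s => 4 / t * (s - a) * v s)
              (4 / t * v s + 4 / t * (s - a) * v' s) s := by
            have := (((hasDerivAt_id s).sub_const a).const_mul (4 / t)).mul (hvD s hs')
            simp only [id_eq, mul_one] at this
            exact this
          exact h1.sub ((hWderiv s hs').const_mul K))
        (fun s hs => by
          have hs' : s ∈ Ioo a t := ⟨hs.1, hs.2.trans hbt⟩
          have hsm := hmems s hs'
          have h1 := hv s hsm
          have h2 := hvw s hsm
          have h3 := hvnonneg s hsm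
          have h4 := hwnonneg s hsm
          have h5 : 0 ≤ 4 / t * (s - a) :=
            mul_nonneg (by positivity) (by linarith [hs.1.le])
          have h6 : 4 / t * (s - a) ≤ 1 := by
            rw [div_mul_eq_mul_div, div_le_one ht0]
            have hsb := hs.2.le
            rw [ha_def]
            rw [hb_def] at hsb
            linarith
          have h7 : 4 / t * (s - a) * v' s ≤ 4 / t * (s - a) * (C * v s) :=
            mul_le_mul_of_nonneg_left h1 h5
          have h8 : 4 / t * (s - a) * (C * v s) ≤ 1 * (C * v s) :=
            mul_le_mul_of_nonneg_right h6 (mul_nonneg hC.le h3)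
          have h9 : (C + 4 / t) * v s ≤ (C + 4 / t) * (Real.sqrt ε * w s) :=
            mul_le_mul_of_nonneg_left h2 (by positivity)
          rw [hK_def]
          nlinarith)
    rw [hWa, sub_self, mul_zero, zero_mul, mul_zero, sub_zero] at hmono
    have hcoef : 4 / t * (b - a) = 1 := by
      rw [ha_def, hb_def]; field_simp; ring
    rw [hcoef, one_mul] at hmono
    linarith
  -- Step C: v t ≤ K * W t
  have stepC : v t ≤ K * W t := by
    have hmono : v t - K * W t ≤ v b - K * W b :=
      antitone_aux (f := fun s => v s - K * W s)
        (f' := fun s => v' s - K * w s) hbt.le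
        (((hvcont.mono ((Icc_subset_Icc hab.le le_rfl).trans hsub)).sub
          (continuousOn_const.mul (hWcont.mono (Icc_subset_Icc hab.le le_rfl)))))
        (fun s hs => by
          have hs' : s ∈ Ioo a t := ⟨hab.trans hs.1, hs.2⟩
          exact (hvD s hs').sub ((hWderiv s hs').const_mul K))
        (fun s hs => by
          have hs' : s ∈ Ioo a t := ⟨hab.trans hs.1, hs.2⟩
          have hsm := hmems s hs'
          have h1 := hv s hsm
          have h2 := hvw s hsm
          have h3 := hvnonneg s hsm
          have h4 := hwnonneg s hsm
          have h5 : 0 < 4 / t := by positivity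
          have h9 : (C + 4 / t) * v s ≤ (C + 4 / t) * (Real.sqrt ε * w s) :=
            mul_le_mul_of_nonneg_left h2 (by positivity)
          rw [hK_def]
          nlinarith)
    linarith [stepB]
  -- Conclusion
  have hrpow : ε ^ ((3:ℝ)/2) = ε * Real.sqrt ε := by
    rcases eq_or_lt_of_le hε with h0 | h0
    · rw [← h0, Real.zero_rpow (by norm_num), Real.sqrt_zero, mul_zero]
    · have h32 : (3:ℝ)/2 = 1 + 1/2 := by norm_num
      rw [h32, Real.rpow_add h0, Real.rpow_one, Real.sqrt_eq_rpow]
  have hD0 : 0 < C + 4 / t := by positivity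
  have hs0 : 0 ≤ Real.sqrt ε := Real.sqrt_nonneg ε
  have hWt : W t ≤ c⁻¹ * (ε + C * ε * t) := by
    rw [inv_mul_eq_div, le_div_iff₀ hc]
    linarith [stepA]
  have hDt : (C + 4 / t) * t = C * t + 4 := by field_simp
  calc v t ≤ K * W t := stepC
    _ ≤ K * (c⁻¹ * (ε + C * ε * t)) := mul_le_mul_of_nonneg_left hWt hK0
    _ ≤ c⁻¹ * (C + 4 / t) ^ 2 * ε ^ ((3:ℝ)/2) * t := by
        rw [hrpow, hK_def]
        have hc' : 0 < c⁻¹ := by positivity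
        nlinarith [mul_nonneg (mul_nonneg hD0.le hs0) (mul_nonneg hε ht0.le),
          mul_nonneg hD0.le hs0, mul_nonneg (mul_nonneg hD0.le hs0) hε,
          mul_nonneg hc'.le (mul_nonneg (mul_nonneg hD0.le hs0) hε)]
end
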